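/- Let (O, *, n) be the split Okubo algebra over a field F of characteristic 3, i.e., the Petersson algebra of the split Cayley algebra (C,·,n) with respect to τ_st: x*y = τ_st(x̄)·τ_st²(ȳ). Let e = 1 be the quaternionic idempotent and let R = Centr(e) ∩ Centr(e)^⊥. Then any element x ∈ R satisfies x*x = 0, and for every x ∈ R the element e + x is an idempotent of (O,*). -/

import Mathlib

/-- The Zorn matrix algebra: elements `(α, u, v, β)` with `α, β ∈ F`, `u, v ∈ F³`. -/
abbrev Zorn (F : Type*) [Field F] := F × (Fin 3 → F) × (Fin 3 → F) × F

/-- The Zorn matrix (vector matrix) multiplication. -/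
def zornMul {F : Type*} [Field F] (x y : Zorn F) : Zorn F :=
  (x.1 * y.1 + dotProduct x.2.1 y.2.2.1,
   x.1 • y.2.1 + y.2.2.2 • x.2.1 - crossProduct x.2.2.1 y.2.2.1,
   y.1 • x.2.2.1 + x.2.2.2 • y.2.2.1 + crossProduct x.2.1 y.2.1,
   x.2.2.2 * y.2.2.2 + dotProduct x.2.2.1 y.2.1)

lemma zorn_one_mul {F : Type*} [Field F] (z : Zorn F) :
    zornMul ((1, 0, 0, 1) : Zorn F) z = z := by
  simp [zornMul, cross_apply, dotProduct]

lemma zorn_mul_one {F : Type*} [Field F] (z : Zorn F) :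
    zornMul z ((1, 0, 0, 1) : Zorn F) = z := by
  obtain ⟨a, u, v, b⟩ := z
  simp [zornMul, cross_apply, dotProduct]
  constructor <;> · funext i; fin_cases i <;> simp [Matrix.vecHead, Matrix.vecTail]

lemma zorn_mul_const {F : Type*} [Field F] (a b g d c e c' e' : F) :
    zornMul ((a, fun _ => c, fun _ => e, b) : Zorn F) ((g, fun _ => c', fun _ => e', d) : Zorn F)
    = ((a * g + 3 * (c * e'), fun _ => a * c' + d * c, fun _ => g * e + b * e',
        b * d + 3 * (e * c')) : Zorn F) := by
  refine Prod.ext ?_ (Prod.ext ?_ (Prod.ext ?_ ?_))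
  · show a * g + dotProduct _ _ = _
    simp [dotProduct, Fin.sum_univ_three]; try ring
  · funext i; fin_cases i <;>
      · simp [zornMul, cross_apply, Matrix.vecHead, Matrix.vecTail]; try ring
  · funext i; fin_cases i <;>
      · simp [zornMul, cross_apply, Matrix.vecHead, Matrix.vecTail]; try ring
  · show b * d + dotProduct _ _ = _
    simp [dotProduct, Fin.sum_univ_three]; try ring

/-- In the split Okubo algebra `x*y = τ_st(x̄)·τ_st²(ȳ)` over a field
of characteristic 3, with quaternionic idempotent `e = 1` and
`R = Centr(e) ∩ Centr(e)^⊥`, every `x ∈ R` satisfies `x*x = 0` and `e + x` is an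
idempotent. -/
theorem okubo_singular_idempotents {F : Type*} [Field F] [CharP F 3]
    (τ : Zorn F → Zorn F)
    (hτ : ∀ x : Zorn F,
      τ x = (x.1, fun j => x.2.1 (j - 1), fun j => x.2.2.1 (j - 1), x.2.2.2))
    (bar : Zorn F → Zorn F)
    (hbar : ∀ x : Zorn F, bar x = (x.2.2.2, -x.2.1, -x.2.2.1, x.1))
    (star : Zorn F → Zorn F → Zorn F)
    (hstar : ∀ x y, star x y = zornMul (τ (bar x)) (τ (τ (bar y))))
    (nz : Zorn F → F)
    (hnz : ∀ x : Zorn F, nz x = x.1 * x.2.2.2 - dotProduct x.2.1 x.2.2.1)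
    (e : Zorn F) (he : e = ((1, 0, 0, 1) : Zorn F))
    (R : Set (Zorn F))
    (hR : ∀ x, x ∈ R ↔ (star e x = star x e ∧
      ∀ y : Zorn F, star e y = star y e → QuadraticMap.polar nz x y = 0)) :
    ∀ x ∈ R, star x x = 0 ∧ star (e + x) (e + x) = e + x := by
  have h3 : (3 : F) = 0 := by exact_mod_cast CharP.cast_eq_zero F 3
  have hbe : bar e = e := by rw [hbar, he]; simp
  have hτe : τ e = e := by
    rw [he, hτ]
    refine Prod.ext rfl (Prod.ext ?_ (Prod.ext ?_ rfl)) <;> · funext j; simp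
  have hse : ∀ y, star e y = τ (τ (bar y)) := by
    intro y; rw [hstar, hbe, hτe, he, zorn_one_mul]
  have hes : ∀ y, star y e = τ (bar y) := by
    intro y; rw [hstar, hbe, hτe, hτe, he, zorn_mul_one]
  intro x hx
  obtain ⟨hc, horth⟩ := (hR x).mp hx
  obtain ⟨a, u, v, b⟩ := x
  -- centralizer condition: u, v are constant vectors
  rw [hse, hes, hbar, hτ, hτ] at hc
  simp only [Prod.mk.injEq] at hc
  obtain ⟨-, hcu, hcv, -⟩ := hc
  have hu : ∀ j : Fin 3, u (j - 1 - 1) = u (j - 1) := by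
    intro j; have := congrFun hcu j; simpa using this
  have hv : ∀ j : Fin 3, v (j - 1 - 1) = v (j - 1) := by
    intro j; have := congrFun hcv j; simpa using this
  have hu1 : u 1 = u 0 := by have := hu 2; simpa using this.symm
  have hu2 : u 2 = u 0 := by have := hu 1; simpa [show (-1 : Fin 3) = 2 by decide] using this
  have hv1 : v 1 = v 0 := by have := hv 2; simpa using this.symm
  have hv2 : v 2 = v 0 := by have := hv 1; simpa [show (-1 : Fin 3) = 2 by decide] using this
  -- orthogonality: a = 0 and b = 0
  have hcen : ∀ y : Zorn F, τ (bar y) = bar y → star e y = star y e := by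
    intro y hy; rw [hse, hes, hy, hy]
  have hb : b = 0 := by
    have h := horth ((1, 0, 0, 0) : Zorn F) (hcen _ (by rw [hbar, hτ]; simp; rfl))
    simp [QuadraticMap.polar, hnz, dotProduct] at h
    linear_combination h
  have ha : a = 0 := by
    have h := horth ((0, 0, 0, 1) : Zorn F) (hcen _ (by rw [hbar, hτ]; simp; rfl))
    simp [QuadraticMap.polar, hnz, dotProduct] at h
    linear_combination h
  subst ha hb
  obtain ⟨c, rfl⟩ : ∃ c, u = fun _ => c :=
    ⟨u 0, by funext i; fin_cases i <;> simp [hu1, hu2]⟩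
  obtain ⟨d, rfl⟩ : ∃ d, v = fun _ => d :=
    ⟨v 0, by funext i; fin_cases i <;> simp [hv1, hv2]⟩
  have hsum : e + ((0, fun _ => c, fun _ => d, 0) : Zorn F)
      = ((1, fun _ => c, fun _ => d, 1) : Zorn F) := by
    rw [he]
    refine Prod.ext (by simp) (Prod.ext ?_ (Prod.ext ?_ (by simp))) <;>
      · funext i; simp
  constructor
  · rw [hstar, hbar, hτ, hτ]
    show zornMul ((0, fun _ => -c, fun _ => -d, 0) : Zorn F)
        ((0, fun _ => -c, fun _ => -d, 0) : Zorn F) = 0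
    rw [zorn_mul_const]
    refine Prod.ext ?_ (Prod.ext ?_ (Prod.ext ?_ ?_))
    · show 0 * 0 + 3 * (-c * -d) = (0 : F); linear_combination (c * d) * h3
    · funext i; show 0 * -c + 0 * -c = (0 : F); ring
    · funext i; show 0 * -d + 0 * -d = (0 : F); ring
    · show 0 * 0 + 3 * (-d * -c) = (0 : F); linear_combination (c * d) * h3
  · rw [hsum, hstar, hbar, hτ, hτ]
    show zornMul ((1, fun _ => -c, fun _ => -d, 1) : Zorn F)
        ((1, fun _ => -c, fun _ => -d, 1) : Zorn F) = (1, fun _ => c, fun _ => d, 1)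
    rw [zorn_mul_const]
    refine Prod.ext ?_ (Prod.ext ?_ (Prod.ext ?_ ?_))
    · show 1 * 1 + 3 * (-c * -d) = (1 : F); linear_combination (c * d) * h3
    · funext i; show 1 * -c + 1 * -c = c; linear_combination (-c) * h3
    · funext i; show 1 * -d + 1 * -d = d; linear_combination (-d) * h3
    · show 1 * 1 + 3 * (-d * -c) = (1 : F); linear_combination (c * d) * h3
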